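/- For every complex number w with |w| < 1 there exists a continuous 1-periodic function φ : ℝ → ℝ such that ∫₀¹ exp(i·φ(t)) dt = w. That is, every point of the open unit disk is the average of a loop with values in the unit circle. -/

import Mathlib

open Real intervalIntegral Complex

private lemma loop_integral (c u : ℝ) (hu : u ≠ 0) :
    (∫ t in (0:ℝ)..1, Complex.exp (Complex.I *
      ((c + 2*u*(Real.arccos (Real.cos (2*Real.pi*t))) : ℝ) : ℂ)))
    = Complex.exp ((c:ℂ) * Complex.I) *
        ((Complex.exp (2*(Real.pi:ℂ)*u*Complex.I) - 1) / (2*(Real.pi:ℂ)*u*Complex.I)) := by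
  have hπ : (Real.pi:ℂ) ≠ 0 := by exact_mod_cast Real.pi_ne_zero
  have huC : (u:ℂ) ≠ 0 := by exact_mod_cast hu
  have hc4 : (4*(Real.pi:ℂ)*u*Complex.I : ℂ) ≠ 0 := by
    apply mul_ne_zero (mul_ne_zero (mul_ne_zero (by norm_num) hπ) huC) Complex.I_ne_zero
  have hc4' : (-(4*(Real.pi:ℂ)*u*Complex.I) : ℂ) ≠ 0 := neg_ne_zero.mpr hc4
  have hf : Continuous fun t : ℝ => Complex.exp (Complex.I *
      ((c + 2*u*(Real.arccos (Real.cos (2*Real.pi*t))) : ℝ) : ℂ)) := by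
    exact Complex.continuous_exp.comp (continuous_const.mul (Complex.continuous_ofReal.comp
      (continuous_const.add (continuous_const.mul (Real.continuous_arccos.comp
        (Real.continuous_cos.comp (continuous_const.mul continuous_id)))))))
  have hint : ∀ a b : ℝ, IntervalIntegrable (fun t : ℝ => Complex.exp (Complex.I *
      ((c + 2*u*(Real.arccos (Real.cos (2*Real.pi*t))) : ℝ) : ℂ))) MeasureTheory.volume a b :=
    fun a b => hf.intervalIntegrable a b
  rw [← intervalIntegral.integral_add_adjacent_intervals (hint 0 (1/2)) (hint (1/2) 1)]
  have h1 : (∫ t in (0:ℝ)..(1/2), Complex.exp (Complex.I *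
      ((c + 2*u*(Real.arccos (Real.cos (2*Real.pi*t))) : ℝ) : ℂ)))
      = ∫ t in (0:ℝ)..(1/2), Complex.exp ((c:ℂ)*Complex.I) *
          Complex.exp ((4*(Real.pi:ℂ)*u*Complex.I) * t) := by
    apply intervalIntegral.integral_congr
    intro t ht
    dsimp only
    rw [Set.uIcc_of_le (by norm_num : (0:ℝ) ≤ 1/2)] at ht
    have hA : Real.arccos (Real.cos (2*Real.pi*t)) = 2*Real.pi*t := by
      apply Real.arccos_cos
      · nlinarith [Real.pi_pos, ht.1]
      · nlinarith [Real.pi_pos, ht.2]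
    rw [hA, ← Complex.exp_add]
    congr 1
    push_cast
    ring
  have h2 : (∫ t in (1/2:ℝ)..1, Complex.exp (Complex.I *
      ((c + 2*u*(Real.arccos (Real.cos (2*Real.pi*t))) : ℝ) : ℂ)))
      = ∫ t in (1/2:ℝ)..1, (Complex.exp ((c:ℂ)*Complex.I) * Complex.exp (4*(Real.pi:ℂ)*u*Complex.I)) *
          Complex.exp ((-(4*(Real.pi:ℂ)*u*Complex.I)) * t) := by
    apply intervalIntegral.integral_congr
    intro t ht
    dsimp only
    rw [Set.uIcc_of_le (by norm_num : (1/2:ℝ) ≤ 1)] at ht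
    have hA : Real.arccos (Real.cos (2*Real.pi*t)) = 2*Real.pi - 2*Real.pi*t := by
      rw [← Real.cos_two_pi_sub (2*Real.pi*t)]
      apply Real.arccos_cos
      · nlinarith [Real.pi_pos, ht.2]
      · nlinarith [Real.pi_pos, ht.1]
    rw [hA, ← Complex.exp_add, ← Complex.exp_add]
    congr 1
    push_cast
    ring
  rw [h1, h2, intervalIntegral.integral_const_mul, intervalIntegral.integral_const_mul,
    integral_exp_mul_complex hc4, integral_exp_mul_complex hc4']
  have e0 : ((4*(Real.pi:ℂ)*u*Complex.I) * ((0:ℝ):ℂ)) = 0 := by push_cast; ring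
  have e1 : ((4*(Real.pi:ℂ)*u*Complex.I) * ((1/2:ℝ):ℂ)) = 2*(Real.pi:ℂ)*u*Complex.I := by
    push_cast; ring
  have e2 : ((-(4*(Real.pi:ℂ)*u*Complex.I)) * ((1/2:ℝ):ℂ)) = -(2*(Real.pi:ℂ)*u*Complex.I) := by
    push_cast; ring
  have e3 : ((-(4*(Real.pi:ℂ)*u*Complex.I)) * ((1:ℝ):ℂ)) = -(4*(Real.pi:ℂ)*u*Complex.I) := by
    push_cast; ring
  rw [e0, e1, e2, e3, Complex.exp_zero]
  have h4 : (4*(Real.pi:ℂ)*u*Complex.I) = 2*(2*(Real.pi:ℂ)*u*Complex.I) := by ring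
  rw [h4]
  generalize hz : (2*(Real.pi:ℂ)*u*Complex.I : ℂ) = z at *
  have hzne : z ≠ 0 := by
    rw [← hz]
    exact mul_ne_zero (mul_ne_zero (mul_ne_zero (by norm_num) hπ) huC) Complex.I_ne_zero
  have h5 : Complex.exp (-(2*z)) = (Complex.exp z)⁻¹ * (Complex.exp z)⁻¹ := by
    rw [← Complex.exp_neg, ← Complex.exp_add]; ring_nf
  have h6 : Complex.exp (-z) = (Complex.exp z)⁻¹ := Complex.exp_neg z
  have h7 : Complex.exp (2*z) = Complex.exp z * Complex.exp z := by
    rw [← Complex.exp_add]; ring_nf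
  rw [h5, h6, h7]
  have hE : Complex.exp z ≠ 0 := Complex.exp_ne_zero z
  field_simp
  ring

/-- Every point of the open unit disk is the average of a loop with values in the unit
circle: for `|w| < 1` there is a continuous `1`-periodic `φ : ℝ → ℝ` with
`∫₀¹ exp(i φ(t)) dt = w`. -/
theorem average_of_circle_loop (w : ℂ) (hw : ‖w‖ < 1) :
    ∃ φ : ℝ → ℝ, Continuous φ ∧ (∀ t : ℝ, φ (t + 1) = φ t) ∧
      (∫ t in (0:ℝ)..1, Complex.exp (Complex.I * (φ t : ℂ))) = w := by
  set r : ℝ := ‖w‖ with hr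
  have hr0 : 0 ≤ r := norm_nonneg w
  have hr1 : r < 1 := hw
  -- choose x₀ with sin x₀ / x₀ > r
  set x₀ : ℝ := min 1 (2*Real.sqrt (1 - r)) with hx₀
  have hx₀pos : 0 < x₀ := by
    have h1r : 0 < 1 - r := by linarith
    exact lt_min one_pos (by positivity)
  have hx₀le1 : x₀ ≤ 1 := min_le_left _ _
  have hx₀sq : x₀^2 ≤ 4*(1-r) := by
    have h1 : x₀ ≤ 2*Real.sqrt (1-r) := min_le_right _ _
    have h2 : (2*Real.sqrt (1-r))^2 = 4*(1-r) := by
      rw [mul_pow, Real.sq_sqrt (by linarith)]; ring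
    nlinarith [hx₀pos]
  have hsin : r * x₀ < Real.sin x₀ := by
    have := Real.sin_gt_sub_cube hx₀pos
    nlinarith [hx₀pos]
  set s₀ : ℝ := x₀ / Real.pi with hs₀
  have hπ := Real.pi_pos
  have hs₀pos : 0 < s₀ := by positivity
  have hs₀le1 : s₀ ≤ 1 := by
    rw [hs₀, div_le_one hπ]
    linarith [Real.pi_gt_three]
  set f : ℝ → ℝ := fun s => Real.sin (Real.pi*s) / (Real.pi*s) with hfdef
  have hcont : ContinuousOn f (Set.Icc s₀ 1) := by
    apply ContinuousOn.div
    · exact (Real.continuous_sin.comp (continuous_const.mul continuous_id)).continuousOn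
    · exact (continuous_const.mul continuous_id).continuousOn
    · intro s hs
      have : 0 < s := lt_of_lt_of_le hs₀pos hs.1
      positivity
  have hf1 : f 1 = 0 := by simp [hfdef, Real.sin_pi]
  have hfs₀ : r < f s₀ := by
    have hx : Real.pi * s₀ = x₀ := by
      rw [hs₀]; field_simp
    rw [hfdef]
    simp only [hx]
    rw [lt_div_iff₀ hx₀pos]
    linarith [hsin]
  have hmem : r ∈ Set.Icc (f 1) (f s₀) := ⟨by rw [hf1]; exact hr0, le_of_lt hfs₀⟩
  obtain ⟨u, hu_mem, hfu⟩ := intermediate_value_Icc' hs₀le1 hcont hmem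
  have hu0 : 0 < u := lt_of_lt_of_le hs₀pos hu_mem.1
  have hπu : (0:ℝ) < Real.pi * u := by positivity
  have hsin_eq : Real.sin (Real.pi*u) = r * (Real.pi*u) := by
    rw [hfdef] at hfu; dsimp only at hfu; rw [div_eq_iff (ne_of_gt hπu)] at hfu
    linarith [hfu]
  set c : ℝ := Complex.arg w - Real.pi*u with hc
  refine ⟨fun t => c + 2*u*(Real.arccos (Real.cos (2*Real.pi*t))), ?_, ?_, ?_⟩
  · exact continuous_const.add (continuous_const.mul (Real.continuous_arccos.comp
      (Real.continuous_cos.comp (continuous_const.mul continuous_id))))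
  · intro t
    have h : 2*Real.pi*(t+1) = 2*Real.pi*t + 2*Real.pi := by ring
    dsimp only
    rw [h, Real.cos_add_two_pi]
  · rw [loop_integral c u (ne_of_gt hu0)]
    have hzne : (2*(Real.pi:ℂ)*u*Complex.I : ℂ) ≠ 0 := by
      apply mul_ne_zero (mul_ne_zero (mul_ne_zero (by norm_num)
        (by exact_mod_cast Real.pi_ne_zero)) (by exact_mod_cast ne_of_gt hu0)) Complex.I_ne_zero
    have hexp : Complex.exp (2*(Real.pi:ℂ)*u*Complex.I) - 1
        = Complex.exp ((Real.pi:ℂ)*u*Complex.I) * (2*Complex.I*Complex.sin ((Real.pi:ℂ)*u)) := by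
      rw [Complex.sin]
      rw [show ∀ a b : ℂ, (2*Complex.I*((a - b)*Complex.I/2)) = b - a from fun a b => by
        linear_combination (a - b) * Complex.I_mul_I]
      rw [mul_sub, ← Complex.exp_add, ← Complex.exp_add]
      ring_nf
      simp
      ring
    have hsinC : Complex.sin ((Real.pi:ℂ)*u) = ((r*(Real.pi*u) : ℝ) : ℂ) := by
      rw [show ((Real.pi:ℂ)*(u:ℂ)) = ((Real.pi*u : ℝ):ℂ) by push_cast; ring,
        ← Complex.ofReal_sin, hsin_eq]
    rw [hexp, hsinC]
    have harg : Complex.exp ((c:ℂ)*Complex.I) * Complex.exp ((Real.pi:ℂ)*u*Complex.I)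
        = Complex.exp ((Complex.arg w : ℂ)*Complex.I) := by
      rw [← Complex.exp_add]
      congr 1
      rw [hc]
      push_cast
      ring
    rw [show Complex.exp ((c:ℂ)*Complex.I) * (Complex.exp ((Real.pi:ℂ)*u*Complex.I) *
          (2*Complex.I*((r*(Real.pi*u) : ℝ) : ℂ)) / (2*(Real.pi:ℂ)*u*Complex.I))
        = (Complex.exp ((c:ℂ)*Complex.I) * Complex.exp ((Real.pi:ℂ)*u*Complex.I)) *
          ((2*Complex.I*((r*(Real.pi*u) : ℝ) : ℂ)) / (2*(Real.pi:ℂ)*u*Complex.I)) by ring,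
      harg, ← Complex.norm_mul_exp_arg_mul_I w]
    have hπC : (Real.pi:ℂ) ≠ 0 := by exact_mod_cast Real.pi_ne_zero
    have huC : (u:ℂ) ≠ 0 := by exact_mod_cast ne_of_gt hu0
    push_cast
    field_simp
    simp only [hr]
    rw [Complex.norm_mul_exp_arg_mul_I w, mul_comm Complex.I ((Complex.arg w : ℝ) : ℂ)]
    linear_combination Complex.norm_mul_exp_arg_mul_I w
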